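/- For every natural number n, n · (3·arccos(1/3) − π) ≠ 4π. (The solid angle 3·arccos(1/3) − π of a regular tetrahedron at a vertex does not divide the full solid angle 4π; consequently a sphere in a compact packing cannot be surrounded only by spheres of its own size.) -/

import Mathlib

open Real

private def tetA : ℕ → ℤ
  | 0 => 1
  | 1 => 1
  | (k + 2) => 2 * tetA (k + 1) - 9 * tetA k

private lemma tetA_cos (k : ℕ) :
    Real.cos (k * Real.arccos (1 / 3)) = (tetA k : ℝ) / 3 ^ k := by
  induction k using Nat.strong_induction_on with
  | _ k ih =>
    match k with
    | 0 => simp [tetA]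
    | 1 =>
      have : Real.cos (Real.arccos (1/3)) = 1/3 := Real.cos_arccos (by norm_num) (by norm_num)
      simpa [tetA] using this
    | (k + 2) =>
      set x := Real.arccos (1 / 3) with hx
      have h1 : Real.cos ((k + 1 : ℕ) * x) = (tetA (k + 1) : ℝ) / 3 ^ (k + 1) :=
        ih (k + 1) (by omega)
      have h0 : Real.cos ((k : ℕ) * x) = (tetA k : ℝ) / 3 ^ k := ih k (by omega)
      have key : Real.cos ((k + 2 : ℕ) * x) + Real.cos ((k : ℕ) * x)
          = 2 * Real.cos ((k + 1 : ℕ) * x) * Real.cos x := by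
        rw [Real.cos_add_cos]
        push_cast
        ring_nf
      have hcx : Real.cos x = 1 / 3 := Real.cos_arccos (by norm_num) (by norm_num)
      have : Real.cos ((k + 2 : ℕ) * x)
          = 2 * ((tetA (k + 1) : ℝ) / 3 ^ (k + 1)) * (1 / 3) - (tetA k : ℝ) / 3 ^ k := by
        rw [← h1, ← h0, ← hcx]; linarith [key]
      rw [this, show tetA (k + 2) = 2 * tetA (k + 1) - 9 * tetA k from rfl]
      push_cast
      field_simp
      ring

private lemma tetA_not_dvd (k : ℕ) : ¬ (3 : ℤ) ∣ tetA k := by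
  induction k using Nat.strong_induction_on with
  | _ k ih =>
    match k with
    | 0 => decide
    | 1 => decide
    | (k + 2) =>
      intro h
      apply ih (k + 1) (by omega)
      have : (3 : ℤ) ∣ 2 * tetA (k + 1) := by
        have h9 : (3 : ℤ) ∣ 9 * tetA k := ⟨3 * tetA k, by ring⟩
        have := dvd_add h h9
        rw [show tetA (k + 2) = 2 * tetA (k + 1) - 9 * tetA k from rfl] at this
        simpa using this
      omega

theorem solid_angle_not_div_four_pi :
    ∀ n : ℕ, (n : ℝ) * (3 * Real.arccos (1 / 3) - Real.pi) ≠ 4 * Real.pi := by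
  intro n h
  rcases Nat.eq_zero_or_pos n with rfl | hn
  · simp at h
  · -- 3n * arccos(1/3) = (n+4) * π
    have hx : ((3 * n : ℕ) : ℝ) * Real.arccos (1 / 3) = ((n + 4 : ℕ) : ℝ) * Real.pi := by
      push_cast
      linarith
    have hcos : Real.cos (((3 * n : ℕ) : ℝ) * Real.arccos (1 / 3)) = (-1) ^ (n + 4) := by
      rw [hx]
      have := Real.cos_add_nat_mul_pi 0 (n + 4)
      simpa using this
    rw [tetA_cos (3 * n)] at hcos
    have h3 : (tetA (3 * n) : ℝ) = (-1) ^ (n + 4) * 3 ^ (3 * n) := by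
      field_simp at hcos
      linarith [hcos]
    have hz : tetA (3 * n) = (-1) ^ (n + 4) * 3 ^ (3 * n) := by
      exact_mod_cast h3
    apply tetA_not_dvd (3 * n)
    rw [hz]
    exact Dvd.dvd.mul_left (dvd_pow_self 3 (by omega)) _
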